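/- arXiv:2508.11382 — 6 statements merged into one kernel-verified Lean document; each statement's English description precedes it below -/
import Mathlib

section
/- Let (A, ·) be a supercommutative associative superalgebra and R : A → A an even linear map satisfying the Rota–Baxter identity R(x)R(y) = R(R(x)y + xR(y)) for all x, y ∈ A. Then the product a ∘ b := R(a)·b makes A a Zinbiel superalgebra, i.e., for all homogeneous a, b, c: a∘(b∘c) = (a∘b)∘c + (−1)^{|a||b|}(b∘a)∘c. -/
/-- A supercommutative associative superalgebra with an even Rota–Baxter
operator `R` becomes a Zinbiel superalgebra under `a ∘ b := R(a)·b`. -/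
theorem rotaBaxter_zinbiel {K A : Type*} [Field K] [CharZero K]
    [AddCommGroup A] [Module K A]
    (grade : ZMod 2 → Submodule K A)
    (mul : A →ₗ[K] A →ₗ[K] A)
    (hgr : ∀ i j : ZMod 2, ∀ a ∈ grade i, ∀ b ∈ grade j, mul a b ∈ grade (i + j))
    (hcomm : ∀ i j : ZMod 2, ∀ a ∈ grade i, ∀ b ∈ grade j,
      mul a b = ((-1 : K) ^ (i.val * j.val)) • mul b a)
    (hassoc : ∀ a b c : A, mul (mul a b) c = mul a (mul b c))
    (R : A →ₗ[K] A)
    (hReven : ∀ i : ZMod 2, ∀ a ∈ grade i, R a ∈ grade i)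
    (hRB : ∀ x y : A, mul (R x) (R y) = R (mul (R x) y + mul x (R y))) :
    ∀ i j k : ZMod 2, ∀ a ∈ grade i, ∀ b ∈ grade j, ∀ c ∈ grade k,
      mul (R a) (mul (R b) c) =
        mul (R (mul (R a) b)) c +
          ((-1 : K) ^ (i.val * j.val)) • mul (R (mul (R b) a)) c := by
  intro i j k a ha b hb c hc
  have h1 : mul a (R b) = ((-1 : K) ^ (i.val * j.val)) • mul (R b) a :=
    hcomm i j a ha (R b) (hReven j b hb)
  rw [← hassoc, hRB, map_add, h1, map_smul, map_add, map_smul,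
    LinearMap.add_apply, LinearMap.smul_apply]
end

section
/- Let (A, ·) be a supercommutative associative superalgebra and R : A → A an odd linear map satisfying the odd Rota–Baxter identity R(x)R(y) = R((−1)^{|x|+1}R(x)y + xR(y)) for all homogeneous x, y ∈ A. Then the product a ∘ b := R(a)·b satisfies a∘(b∘c) = (−1)^{|a|+1}(a∘b)∘c + (−1)^{|a|(|b|+1)}(b∘a)∘c for all homogeneous a, b, c. -/
/-- A supercommutative associative superalgebra with an odd Rota–Baxter
operator `R` satisfies the odd-Zinbiel identity for `a ∘ b := R(a)·b`. -/
theorem oddRotaBaxter_oddZinbiel {K A : Type*} [Field K] [CharZero K]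
    [AddCommGroup A] [Module K A]
    (grade : ZMod 2 → Submodule K A)
    (mul : A →ₗ[K] A →ₗ[K] A)
    (hgr : ∀ i j : ZMod 2, ∀ a ∈ grade i, ∀ b ∈ grade j, mul a b ∈ grade (i + j))
    (hcomm : ∀ i j : ZMod 2, ∀ a ∈ grade i, ∀ b ∈ grade j,
      mul a b = ((-1 : K) ^ (i.val * j.val)) • mul b a)
    (hassoc : ∀ a b c : A, mul (mul a b) c = mul a (mul b c))
    (R : A →ₗ[K] A)
    (hRodd : ∀ i : ZMod 2, ∀ a ∈ grade i, R a ∈ grade (i + 1))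
    (hRB : ∀ i : ZMod 2, ∀ x ∈ grade i, ∀ y : A,
      mul (R x) (R y) = R (((-1 : K) ^ ((i + 1 : ZMod 2).val)) • mul (R x) y + mul x (R y))) :
    ∀ i j k : ZMod 2, ∀ a ∈ grade i, ∀ b ∈ grade j, ∀ c ∈ grade k,
      mul (R a) (mul (R b) c) =
        ((-1 : K) ^ ((i + 1 : ZMod 2).val)) • mul (R (mul (R a) b)) c +
          ((-1 : K) ^ (i.val * ((j + 1 : ZMod 2).val))) • mul (R (mul (R b) a)) c := by
  intro i j k a ha b hb c hc
  have h1 : mul (R a) (mul (R b) c) = mul (mul (R a) (R b)) c := (hassoc _ _ _).symm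
  rw [h1, hRB i a ha b, hcomm i (j+1) a ha (R b) (hRodd j b hb), map_add, map_smul,
    map_smul, map_add, LinearMap.add_apply, map_smul, map_smul, LinearMap.smul_apply,
    LinearMap.smul_apply]
end

section
/- Let (A, ∘) be a Zinbiel superalgebra and R : A → A an even Rota–Baxter operator (R(x)∘R(y) = R(R(x)∘y + x∘R(y))). Define a new product a ∘₁ b := R(a)∘b + a∘R(b). Then (A, ∘₁) is again a Zinbiel superalgebra. -/
/-- If `(A,∘)` is a Zinbiel superalgebra and `R` an even Rota–Baxter
operator, then `a ∘₁ b := R(a)∘b + a∘R(b)` again makes `A` a Zinbiel superalgebra. -/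
theorem zinbiel_new_product_zinbiel {K A : Type*} [Field K] [CharZero K]
    [AddCommGroup A] [Module K A]
    (grade : ZMod 2 → Submodule K A)
    (mul : A →ₗ[K] A →ₗ[K] A)
    (hgr : ∀ i j : ZMod 2, ∀ a ∈ grade i, ∀ b ∈ grade j, mul a b ∈ grade (i + j))
    (hZinbiel : ∀ i j : ZMod 2, ∀ a ∈ grade i, ∀ b ∈ grade j, ∀ c : A,
      mul a (mul b c) =
        mul (mul a b) c + ((-1 : K) ^ (i.val * j.val)) • mul (mul b a) c)
    (R : A →ₗ[K] A)
    (hReven : ∀ i : ZMod 2, ∀ a ∈ grade i, R a ∈ grade i)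
    (hRB : ∀ x y : A, mul (R x) (R y) = R (mul (R x) y + mul x (R y))) :
    ∀ i j k : ZMod 2, ∀ a ∈ grade i, ∀ b ∈ grade j, ∀ c ∈ grade k,
      -- a ∘₁ (b ∘₁ c)
      mul (R a) (mul (R b) c + mul b (R c)) + mul a (R (mul (R b) c + mul b (R c))) =
        -- (a ∘₁ b) ∘₁ c
        (mul (R (mul (R a) b + mul a (R b))) c + mul (mul (R a) b + mul a (R b)) (R c)) +
        -- (−1)^{|a||b|} (b ∘₁ a) ∘₁ c
        ((-1 : K) ^ (i.val * j.val)) •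
          (mul (R (mul (R b) a + mul b (R a))) c + mul (mul (R b) a + mul b (R a)) (R c)) := by
  intro i j k a ha b hb c hc
  have h1 := hZinbiel i j (R a) (hReven i a ha) (R b) (hReven j b hb) c
  have h2 := hZinbiel i j (R a) (hReven i a ha) b hb (R c)
  have h3 := hZinbiel i j a ha (R b) (hReven j b hb) (R c)
  rw [← hRB a b, ← hRB b a, ← hRB b c]
  simp only [map_add, LinearMap.add_apply]
  rw [h1, h2, h3]
  simp only [smul_add]
  abel
end

section
/- Let (A, ∘) be a Zinbiel superalgebra, R an even Rota–Baxter operator on A, and define products inductively by a ∘₀ b = a∘b and a ∘_{i+1} b = R(a) ∘ᵢ b + a ∘ᵢ R(b). Then (A, ∘ᵢ) is a Zinbiel superalgebra for every i ≥ 0. -/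
/-- The inductively defined family of products `∘ᵢ`:
`a ∘₀ b = a ∘ b` and `a ∘_{i+1} b = R(a) ∘ᵢ b + a ∘ᵢ R(b)`. -/
def iterProd {K A : Type*} [Field K] [AddCommGroup A] [Module K A]
    (mul : A →ₗ[K] A →ₗ[K] A) (R : A →ₗ[K] A) : ℕ → A → A → A
  | 0, a, b => mul a b
  | n + 1, a, b => iterProd mul R n (R a) b + iterProd mul R n a (R b)

theorem iterProd_succ_eq {K A : Type*} [Field K] [AddCommGroup A] [Module K A]
    (mul : A →ₗ[K] A →ₗ[K] A) (R : A →ₗ[K] A) :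
    ∀ n a b, iterProd mul R (n + 1) a b =
      iterProd (mul ∘ₗ R + mul.compl₂ R) R n a b := by
  intro n
  induction n with
  | zero =>
    intro a b
    simp [iterProd]
  | succ n ih =>
    intro a b
    show iterProd mul R (n + 1) (R a) b + iterProd mul R (n + 1) a (R b) = _
    rw [ih, ih]
    rfl

theorem iterProd_zinbiel_aux {K A : Type*} [Field K] [CharZero K]
    [AddCommGroup A] [Module K A]
    (grade : ZMod 2 → Submodule K A)
    (R : A →ₗ[K] A)
    (hReven : ∀ i : ZMod 2, ∀ a ∈ grade i, R a ∈ grade i) :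
    ∀ n : ℕ, ∀ mul : A →ₗ[K] A →ₗ[K] A,
    (∀ i j : ZMod 2, ∀ a ∈ grade i, ∀ b ∈ grade j, mul a b ∈ grade (i + j)) →
    (∀ i j : ZMod 2, ∀ a ∈ grade i, ∀ b ∈ grade j, ∀ c : A,
      mul a (mul b c) =
        mul (mul a b) c + ((-1 : K) ^ (i.val * j.val)) • mul (mul b a) c) →
    (∀ x y : A, mul (R x) (R y) = R (mul (R x) y + mul x (R y))) →
    ∀ i j k : ZMod 2, ∀ a ∈ grade i, ∀ b ∈ grade j, ∀ c ∈ grade k,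
      iterProd mul R n a (iterProd mul R n b c) =
        iterProd mul R n (iterProd mul R n a b) c +
          ((-1 : K) ^ (i.val * j.val)) • iterProd mul R n (iterProd mul R n b a) c := by
  intro n
  induction n with
  | zero =>
    intro mul hgr hZinbiel hRB i j k a ha b hb c hc
    exact hZinbiel i j a ha b hb c
  | succ n ih =>
    intro mul hgr hZinbiel hRB i j k a ha b hb c hc
    set M : A →ₗ[K] A →ₗ[K] A := mul ∘ₗ R + mul.compl₂ R with hMdef
    have hM : ∀ x y : A, M x y = mul (R x) y + mul x (R y) := fun x y => rfl
    simp only [iterProd_succ_eq]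
    -- new hypotheses for M
    have hgr' : ∀ i j : ZMod 2, ∀ a ∈ grade i, ∀ b ∈ grade j, M a b ∈ grade (i + j) := by
      intro i j a ha b hb
      rw [hM]
      exact add_mem (hgr i j _ (hReven i a ha) b hb) (hgr i j a ha _ (hReven j b hb))
    have hRB' : ∀ x y : A, M (R x) (R y) = R (M (R x) y + M x (R y)) := by
      intro x y
      simp only [hM, map_add]
      rw [hRB (R x) y, hRB x (R y)]
      simp only [map_add]
      try abel
    have hZinbiel' : ∀ i j : ZMod 2, ∀ a ∈ grade i, ∀ b ∈ grade j, ∀ c : A,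
        M a (M b c) = M (M a b) c + ((-1 : K) ^ (i.val * j.val)) • M (M b a) c := by
      intro i j a ha b hb c
      have h1 := hZinbiel i j (R a) (hReven i a ha) (R b) (hReven j b hb) c
      have h2 := hZinbiel i j (R a) (hReven i a ha) b hb (R c)
      have h3 := hZinbiel i j a ha (R b) (hReven j b hb) (R c)
      have hAB := hRB a b
      have hBA := hRB b a
      have hBC := hRB b c
      simp only [hM]
      rw [← hBC, ← hAB, ← hBA]
      simp only [map_add, LinearMap.add_apply]
      rw [h1, h2, h3]
      simp only [smul_add]
      abel
    have := ih M hgr' hZinbiel' hRB' i j k a ha b hb c hc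
    exact this

/-- Each product `∘ᵢ` built from a Zinbiel superalgebra `(A,∘)` and an even
Rota–Baxter operator `R` makes `A` a Zinbiel superalgebra. -/
theorem iterProd_zinbiel {K A : Type*} [Field K] [CharZero K]
    [AddCommGroup A] [Module K A]
    (grade : ZMod 2 → Submodule K A)
    (mul : A →ₗ[K] A →ₗ[K] A)
    (hgr : ∀ i j : ZMod 2, ∀ a ∈ grade i, ∀ b ∈ grade j, mul a b ∈ grade (i + j))
    (hZinbiel : ∀ i j : ZMod 2, ∀ a ∈ grade i, ∀ b ∈ grade j, ∀ c : A,
      mul a (mul b c) =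
        mul (mul a b) c + ((-1 : K) ^ (i.val * j.val)) • mul (mul b a) c)
    (R : A →ₗ[K] A)
    (hReven : ∀ i : ZMod 2, ∀ a ∈ grade i, R a ∈ grade i)
    (hRB : ∀ x y : A, mul (R x) (R y) = R (mul (R x) y + mul x (R y))) :
    ∀ n : ℕ, ∀ i j k : ZMod 2, ∀ a ∈ grade i, ∀ b ∈ grade j, ∀ c ∈ grade k,
      iterProd mul R n a (iterProd mul R n b c) =
        iterProd mul R n (iterProd mul R n a b) c +
          ((-1 : K) ^ (i.val * j.val)) • iterProd mul R n (iterProd mul R n b a) c := by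
  intro n
  exact iterProd_zinbiel_aux grade R hReven n mul hgr hZinbiel hRB
end

section
/- Let X = {x, y} with |x| = 1, |y| = 0, and let ST(X) be the free special Tortkara superalgebra inside the free Zinbiel superalgebra Zin(X). Let I be the ideal of ST(X) generated by f₁ = ȳyx (= yyx − yxy with appropriate Koszul signs, i.e. the skew-right-commutative element of yyx) and f₂ = yxx (a left-normed monomial, which lies in ST(X) since x is odd). Let I′ be the ideal of Zin(X) generated by I. Then the element ω = −(x̄yxy) − yyxx lies in I′ ∩ ST(X) but not in I; consequently the quotient ST(X)/I is an exceptional (non-special) Tortkara superalgebra. -/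
noncomputable section

/-- Parity of a word over a `ZMod 2`-graded alphabet. -/
def wparity {X : Type*} (px : X → ZMod 2) (l : List X) : ZMod 2 := (l.map px).sum

/-- The super shuffle of two basis words, as an element of the free module on words. -/
def shw (K : Type*) [Field K] {X : Type*} (px : X → ZMod 2) :
    List X → List X → (List X →₀ K)
  | [], v => Finsupp.single v 1
  | a :: u, [] => Finsupp.single (a :: u) 1
  | a :: u, b :: v =>
      Finsupp.mapDomain (List.cons a) (shw K px u (b :: v)) +
        ((-1 : K) ^ ((px b).val * (wparity px (a :: u)).val)) •
          Finsupp.mapDomain (List.cons b) (shw K px (a :: u) v)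
  termination_by u v => u.length + v.length
  decreasing_by all_goals simp +arith +decide

/-- The Zinbiel product of two basis words:
`u ∘ (w ++ [x]) = (u ⊔⊔ w) x` (and `u ∘ [] = 0`, unused). -/
def zw (K : Type*) [Field K] {X : Type*} (px : X → ZMod 2) :
    List X → List X → (List X →₀ K)
  | _, [] => 0
  | u, b :: v =>
      Finsupp.mapDomain (fun l => l ++ [(b :: v).getLast (List.cons_ne_nil b v)])
        (shw K px u ((b :: v).dropLast))

/-- The Zinbiel product on the free Zinbiel superalgebra `Zin(X)`, realized as the
free module on (nonempty) words over `X`. -/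
def zmul (K : Type*) [Field K] {X : Type*} (px : X → ZMod 2)
    (f g : List X →₀ K) : List X →₀ K :=
  f.sum fun u cu => g.sum fun v cv => (cu * cv) • zw K px u v

/-- The supercommutator `[f,g] = fg − (−1)^{|f||g|}gf` on `Zin(X)`, extended
bilinearly from homogeneous (basis-word) components. -/
def zbrk (K : Type*) [Field K] {X : Type*} (px : X → ZMod 2)
    (f g : List X →₀ K) : List X →₀ K :=
  zmul K px f g -
    f.sum fun u cu => g.sum fun v cv =>
      (cu * cv * (-1 : K) ^ ((wparity px u).val * (wparity px v).val)) • zw K px v u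

/-- The map `p` on basis words: `p(x) = −x`, `p(xy) = (−1)^{|x||y|}yx`, and
`p(u y z) = (−1)^{|y||z|} u z y` for words of length ≥ 3. -/
def pw (K : Type*) [Field K] {X : Type*} (px : X → ZMod 2) (l : List X) :
    List X →₀ K :=
  match l.reverse with
  | [] => 0
  | [a] => -Finsupp.single [a] 1
  | z :: y :: u =>
      ((-1 : K) ^ ((px y).val * (px z).val)) • Finsupp.single ((y :: z :: u).reverse) 1

/-- The linear extension of `p` to `Zin(X)`. -/
def pmap (K : Type*) [Field K] {X : Type*} (px : X → ZMod 2)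
    (f : List X →₀ K) : List X →₀ K :=
  f.sum fun l c => c • pw K px l

/-- Membership in the free special Tortkara superalgebra `ST(X)`: the
super-subalgebra of `(Zin(X), [·,·])` generated by `X`. -/
inductive InST (K : Type*) [Field K] {X : Type*} (px : X → ZMod 2) :
    (List X →₀ K) → Prop
  | gen (x : X) : InST K px (Finsupp.single [x] 1)
  | zero : InST K px 0
  | add {f g : List X →₀ K} : InST K px f → InST K px g → InST K px (f + g)
  | smul (c : K) {f : List X →₀ K} : InST K px f → InST K px (c • f)
  | br {f g : List X →₀ K} : InST K px f → InST K px g → InST K px (zbrk K px f g)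


/-- Membership in the ideal of the Tortkara superalgebra `ST(X)` generated by a set
`S ⊆ ST(X)`. -/
inductive InIdealST (K : Type*) [Field K] {X : Type*} (px : X → ZMod 2)
    (S : Set (List X →₀ K)) : (List X →₀ K) → Prop
  | gen {f : List X →₀ K} : f ∈ S → InIdealST K px S f
  | zero : InIdealST K px S 0
  | add {f g : List X →₀ K} :
      InIdealST K px S f → InIdealST K px S g → InIdealST K px S (f + g)
  | smul (c : K) {f : List X →₀ K} : InIdealST K px S f → InIdealST K px S (c • f)
  | brL {g f : List X →₀ K} :
      InST K px g → InIdealST K px S f → InIdealST K px S (zbrk K px g f)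
  | brR {g f : List X →₀ K} :
      InST K px g → InIdealST K px S f → InIdealST K px S (zbrk K px f g)

/-- Membership in the ideal of the Zinbiel superalgebra `Zin(X)` generated by a set
`S`. -/
inductive InIdealZin (K : Type*) [Field K] {X : Type*} (px : X → ZMod 2)
    (S : Set (List X →₀ K)) : (List X →₀ K) → Prop
  | gen {f : List X →₀ K} : f ∈ S → InIdealZin K px S f
  | zero : InIdealZin K px S 0
  | add {f g : List X →₀ K} :
      InIdealZin K px S f → InIdealZin K px S g → InIdealZin K px S (f + g)
  | smul (c : K) {f : List X →₀ K} : InIdealZin K px S f → InIdealZin K px S (c • f)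
  | mulL (g : List X →₀ K) {f : List X →₀ K} :
      InIdealZin K px S f → InIdealZin K px S (zmul K px g f)
  | mulR (g : List X →₀ K) {f : List X →₀ K} :
      InIdealZin K px S f → InIdealZin K px S (zmul K px f g)

/-- The parity function on the two-element alphabet `{x, y} = {true, false}`:
`x = true` is odd, `y = false` is even. -/
def pxy : Bool → ZMod 2 := fun b => if b then 1 else 0
section Aux

variable {K : Type*} [Field K] {X : Type*} (px : X → ZMod 2)

theorem mapDomain_cons_ne {a : X} {h : List X →₀ K} {w : List X}
    (hw : Finsupp.mapDomain (List.cons a) h w ≠ 0) : ∃ w', w = a :: w' ∧ h w' ≠ 0 := by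
  rcases w with _ | ⟨b, w⟩
  · exact absurd (Finsupp.mapDomain_notin_range _ _ (by simp)) hw
  · by_cases hab : a = b
    · subst hab
      refine ⟨w, rfl, ?_⟩
      rwa [show (a :: w : List X) = (List.cons a) w from rfl,
        Finsupp.mapDomain_apply List.cons_injective] at hw
    · refine absurd (Finsupp.mapDomain_notin_range _ _ ?_) hw
      rintro ⟨w', hw'⟩
      injection hw' with h1 _
      exact hab h1

theorem mapDomain_append_ne {z : X} {h : List X →₀ K} {w : List X}
    (hw : Finsupp.mapDomain (fun l => l ++ [z]) h w ≠ 0) :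
    ∃ w', w = w' ++ [z] ∧ h w' ≠ 0 := by
  by_cases hr : w ∈ Set.range (fun l : List X => l ++ [z])
  · obtain ⟨w', rfl⟩ := hr
    exact ⟨w', rfl, by rwa [Finsupp.mapDomain_apply (List.append_left_injective _)] at hw⟩
  · exact absurd (Finsupp.mapDomain_notin_range _ _ hr) hw

theorem single_apply_ne {a w : List X} {b : K} (h : Finsupp.single a b w ≠ 0) : w = a := by
  by_contra hne
  exact h (Finsupp.single_eq_of_ne' fun hh => hne hh.symm)

theorem shw_length_aux : ∀ (n : ℕ) (u v w : List X), u.length + v.length ≤ n →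
    shw K px u v w ≠ 0 → w.length = u.length + v.length := by
  intro n
  induction n with
  | zero =>
    intro u v w hn h
    rcases u with _ | ⟨a, u⟩
    · rw [shw] at h
      rw [single_apply_ne h]; simp
    · simp at hn
  | succ n ih =>
    intro u v w hn h
    rcases u with _ | ⟨a, u⟩
    · rw [shw] at h
      rw [single_apply_ne h]; simp
    · rcases v with _ | ⟨b, v⟩
      · rw [shw] at h
        rw [single_apply_ne h]; simp
      · rw [shw, Finsupp.add_apply] at h
        by_cases h1 : Finsupp.mapDomain (List.cons a) (shw K px u (b :: v)) w = 0
        · rw [h1, zero_add, Finsupp.smul_apply] at h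
          have h2 : Finsupp.mapDomain (List.cons b) (shw K px (a :: u) v) w ≠ 0 := by
            intro hz; rw [hz] at h; exact h (smul_zero _)
          obtain ⟨w', rfl, hw'⟩ := mapDomain_cons_ne h2
          have := ih (a :: u) v w' (by simp at hn ⊢; omega) hw'
          simp at this ⊢; omega
        · obtain ⟨w', rfl, hw'⟩ := mapDomain_cons_ne h1
          have := ih u (b :: v) w' (by simp at hn ⊢; omega) hw'
          simp at this ⊢; omega

theorem shw_length {u v w : List X} (h : shw K px u v w ≠ 0) :
    w.length = u.length + v.length :=
  shw_length_aux px _ u v w le_rfl h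

theorem zw_length {u v w : List X} (h : zw K px u v w ≠ 0) :
    w.length = u.length + v.length := by
  rcases v with _ | ⟨b, v⟩
  · rw [zw] at h; exact absurd rfl h
  · rw [zw] at h
    obtain ⟨w', rfl, hw'⟩ := mapDomain_append_ne h
    have := shw_length px hw'
    simp [List.length_append] at this ⊢
    omega

theorem zw_apply_len {u v w : List X} (h : w.length ≠ u.length + v.length) :
    zw K px u v w = 0 := by
  by_contra hc; exact h (zw_length px hc)

theorem zw_apply_nil (u v : List X) : zw K px u v [] = 0 := by
  rcases v with _ | ⟨b, v⟩
  · rw [zw]; rfl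
  · exact zw_apply_len px (by simp)


theorem fsum_eq_zero {α M N : Type*} [Zero M] [AddCommMonoid N] {f : α →₀ M} {F : α → M → N}
    (h : ∀ a, f a ≠ 0 → F a (f a) = 0) : f.sum F = 0 := by
  rw [Finsupp.sum]
  exact Finset.sum_eq_zero fun a ha => h a (Finsupp.mem_support_iff.mp ha)

theorem apply_zbrk (T : (List X →₀ K) →ₗ[K] K) (f g : List X →₀ K) :
    T (zbrk K px f g) = f.sum fun u cu => g.sum fun v cv =>
      cu * cv * (T (zw K px u v) -
        ((-1 : K) ^ ((wparity px u).val * (wparity px v).val)) * T (zw K px v u)) := by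
  rw [zbrk, map_sub, zmul, map_finsuppSum, map_finsuppSum, ← Finsupp.sum_sub]
  apply Finsupp.sum_congr
  intro u _
  rw [map_finsuppSum, map_finsuppSum, ← Finsupp.sum_sub]
  apply Finsupp.sum_congr
  intro v _
  rw [map_smul, map_smul, smul_eq_mul, smul_eq_mul]
  ring

theorem zbrk_apply_nil (f g : List X →₀ K) : zbrk K px f g [] = 0 := by
  have h := apply_zbrk px (Finsupp.lapply ([] : List X)) f g
  rw [Finsupp.lapply_apply] at h
  rw [h]
  apply fsum_eq_zero
  intro u _
  apply fsum_eq_zero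
  intro v _
  rw [Finsupp.lapply_apply, Finsupp.lapply_apply, zw_apply_nil, zw_apply_nil]
  ring

theorem InST_apply_nil {g : List X →₀ K} (h : InST K px g) : g [] = 0 := by
  induction h with
  | gen a => exact Finsupp.single_eq_of_ne (by simp)
  | zero => rfl
  | add _ _ ih1 ih2 => rw [Finsupp.add_apply, ih1, ih2, add_zero]
  | smul c _ ih => rw [Finsupp.smul_apply, ih, smul_zero]
  | br _ _ _ _ => exact zbrk_apply_nil px _ _

theorem zmul_single_single (u v : List X) (a b : K) :
    zmul K px (Finsupp.single u a) (Finsupp.single v b) = (a * b) • zw K px u v := by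
  rw [zmul, Finsupp.sum_single_index, Finsupp.sum_single_index]
  · simp
  · rw [Finsupp.sum_single_index] <;> simp

theorem zbrk_single_single (u v : List X) (a b : K) :
    zbrk K px (Finsupp.single u a) (Finsupp.single v b) =
      (a * b) • zw K px u v -
        (a * b * (-1 : K) ^ ((wparity px u).val * (wparity px v).val)) • zw K px v u := by
  rw [zbrk, zmul_single_single, Finsupp.sum_single_index, Finsupp.sum_single_index]
  · simp
  · rw [Finsupp.sum_single_index] <;> simp

theorem zmul_add_left (f g h : List X →₀ K) :
    zmul K px (f + g) h = zmul K px f h + zmul K px g h := by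
  rw [zmul, zmul, zmul]
  apply Finsupp.sum_add_index'
  · intro u; simp
  · intro u b₁ b₂
    rw [← Finsupp.sum_add]
    apply Finsupp.sum_congr
    intro v _
    rw [add_mul, add_smul]

theorem zmul_add_right (f g h : List X →₀ K) :
    zmul K px f (g + h) = zmul K px f g + zmul K px f h := by
  rw [zmul, zmul, zmul, ← Finsupp.sum_add]
  apply Finsupp.sum_congr
  intro u _
  apply Finsupp.sum_add_index'
  · intro v; simp
  · intro v b₁ b₂
    rw [mul_add, add_smul]

theorem zbrk_add_left (f g h : List X →₀ K) :
    zbrk K px (f + g) h = zbrk K px f h + zbrk K px g h := by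
  rw [zbrk, zbrk, zbrk, zmul_add_left]
  rw [Finsupp.sum_add_index']
  · abel
  · intro u; simp
  · intro u b₁ b₂
    rw [← Finsupp.sum_add]
    apply Finsupp.sum_congr
    intro v _
    rw [add_mul, add_mul, add_smul]

theorem zbrk_add_right (f g h : List X →₀ K) :
    zbrk K px f (g + h) = zbrk K px f g + zbrk K px f h := by
  rw [zbrk, zbrk, zbrk, zmul_add_right]
  have : (f.sum fun u cu => (g + h).sum fun v cv =>
      (cu * cv * (-1 : K) ^ ((wparity px u).val * (wparity px v).val)) • zw K px v u) =
      (f.sum fun u cu => g.sum fun v cv =>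
        (cu * cv * (-1 : K) ^ ((wparity px u).val * (wparity px v).val)) • zw K px v u) +
      (f.sum fun u cu => h.sum fun v cv =>
        (cu * cv * (-1 : K) ^ ((wparity px u).val * (wparity px v).val)) • zw K px v u) := by
    rw [← Finsupp.sum_add]
    apply Finsupp.sum_congr
    intro u _
    apply Finsupp.sum_add_index'
    · intro v; simp
    · intro v b₁ b₂
      rw [mul_add, add_mul, add_smul]
  rw [this]
  abel


theorem zmul_zero_right (f : List X →₀ K) : zmul K px f 0 = 0 := by
  simp [zmul, Finsupp.sum_zero_index]

theorem zbrk_zero_left (g : List X →₀ K) : zbrk K px 0 g = 0 := by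
  simp [zbrk, zmul, Finsupp.sum_zero_index]

theorem zbrk_zero_right (f : List X →₀ K) : zbrk K px f 0 = 0 := by
  simp [zbrk, zmul, Finsupp.sum_zero_index]

theorem zmul_neg_right (f g : List X →₀ K) : zmul K px f (-g) = -zmul K px f g := by
  have h := zmul_add_right px f g (-g)
  rw [add_neg_cancel, zmul_zero_right] at h
  exact (eq_neg_of_add_eq_zero_right h.symm)

theorem zmul_sub_right (f g h : List X →₀ K) :
    zmul K px f (g - h) = zmul K px f g - zmul K px f h := by
  rw [sub_eq_add_neg, zmul_add_right, zmul_neg_right, sub_eq_add_neg]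

theorem zbrk_neg_left (f g : List X →₀ K) : zbrk K px (-f) g = -zbrk K px f g := by
  have h := zbrk_add_left px f (-f) g
  rw [add_neg_cancel, zbrk_zero_left] at h
  exact (eq_neg_of_add_eq_zero_right h.symm)

theorem zbrk_neg_right (f g : List X →₀ K) : zbrk K px f (-g) = -zbrk K px f g := by
  have h := zbrk_add_right px f g (-g)
  rw [add_neg_cancel, zbrk_zero_right] at h
  exact (eq_neg_of_add_eq_zero_right h.symm)

theorem zbrk_sub_left (f g h : List X →₀ K) :
    zbrk K px (f - g) h = zbrk K px f h - zbrk K px g h := by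
  rw [sub_eq_add_neg, zbrk_add_left, zbrk_neg_left, sub_eq_add_neg]

theorem zbrk_sub_right (f g h : List X →₀ K) :
    zbrk K px f (g - h) = zbrk K px f g - zbrk K px f h := by
  rw [sub_eq_add_neg, zbrk_add_right, zbrk_neg_right, sub_eq_add_neg]

@[simp] theorem zmod2_val_one : (1 : ZMod 2).val = 1 := rfl
@[simp] theorem zmod2_val_zero : (0 : ZMod 2).val = 0 := rfl
@[simp] theorem zmod2_one_add_one : (1 + 1 : ZMod 2) = 0 := rfl
@[simp] theorem pxy_true : pxy true = 1 := rfl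
@[simp] theorem pxy_false : pxy false = 0 := rfl

end Aux

section BoolSide

variable {K : Type*} [Field K]

theorem mapDomain_neg' {α β : Type*} (f : α → β) (g : α →₀ K) :
    Finsupp.mapDomain f (-g) = -Finsupp.mapDomain f g := by
  have h : (-g) = (-1 : K) • g := by rw [neg_smul, one_smul]
  rw [h, Finsupp.mapDomain_smul, neg_smul, one_smul]

local notation "sg" w => (Finsupp.single w (1:K))

-- concrete zw computations
theorem zwc1 : zw K pxy [true] [false,false,true] =
    (sg [false,false,true,true]) + (sg [false,true,false,true]) + (sg [true,false,false,true]) := by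
  simp [zw, shw, wparity, pxy, Finsupp.mapDomain_single, Finsupp.mapDomain_add,
    Finsupp.mapDomain_smul, mapDomain_neg']
  try module

theorem zwc2 : zw K pxy [false,false,true] [true] = (sg [false,false,true,true]) := by
  simp [zw, shw, wparity, pxy, Finsupp.mapDomain_single, Finsupp.mapDomain_add,
    Finsupp.mapDomain_smul, mapDomain_neg']
  try module

theorem zwc3 : zw K pxy [true] [false,true,false] = (sg [true,false,true,false]) := by
  simp [zw, shw, wparity, pxy, Finsupp.mapDomain_single, Finsupp.mapDomain_add,
    Finsupp.mapDomain_smul, mapDomain_neg']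
  try module

theorem zwc4 : zw K pxy [false,true,false] [true] = (sg [false,true,false,true]) := by
  simp [zw, shw, wparity, pxy, Finsupp.mapDomain_single, Finsupp.mapDomain_add,
    Finsupp.mapDomain_smul, mapDomain_neg']
  try module

theorem zwc5 : zw K pxy [true] [false,true,true] = (sg [true,false,true,true]) := by
  simp [zw, shw, wparity, pxy, Finsupp.mapDomain_single, Finsupp.mapDomain_add,
    Finsupp.mapDomain_smul, mapDomain_neg']
  try module

theorem zwc6 : zw K pxy [false,true,true] [true] = (sg [false,true,true,true]) := by
  simp [zw, shw, wparity, pxy, Finsupp.mapDomain_single, Finsupp.mapDomain_add,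
    Finsupp.mapDomain_smul, mapDomain_neg']
  try module

theorem zwc7 : zw K pxy [false] [false,false,true] =
    (sg [false,false,false,true]) + (sg [false,false,false,true]) + (sg [false,false,false,true]) := by
  simp [zw, shw, wparity, pxy, Finsupp.mapDomain_single, Finsupp.mapDomain_add,
    Finsupp.mapDomain_smul, mapDomain_neg']
  try module

theorem zwc8 : zw K pxy [false,false,true] [false] = (sg [false,false,true,false]) := by
  simp [zw, shw, wparity, pxy, Finsupp.mapDomain_single, Finsupp.mapDomain_add,
    Finsupp.mapDomain_smul, mapDomain_neg']
  try module

theorem zwc9 : zw K pxy [false] [false,true,false] =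
    (sg [false,false,true,false]) + (sg [false,false,true,false]) + (sg [false,true,false,false]) := by
  simp [zw, shw, wparity, pxy, Finsupp.mapDomain_single, Finsupp.mapDomain_add,
    Finsupp.mapDomain_smul, mapDomain_neg']
  try module

theorem zwc10 : zw K pxy [false,true,false] [false] = (sg [false,true,false,false]) := by
  simp [zw, shw, wparity, pxy, Finsupp.mapDomain_single, Finsupp.mapDomain_add,
    Finsupp.mapDomain_smul, mapDomain_neg']
  try module

theorem zwc11 : zw K pxy [false] [false,true,true] =
    (sg [false,false,true,true]) + (sg [false,false,true,true]) + (sg [false,true,false,true]) := by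
  simp [zw, shw, wparity, pxy, Finsupp.mapDomain_single, Finsupp.mapDomain_add,
    Finsupp.mapDomain_smul, mapDomain_neg']
  try module

theorem zwc12 : zw K pxy [false,true,true] [false] = (sg [false,true,true,false]) := by
  simp [zw, shw, wparity, pxy, Finsupp.mapDomain_single, Finsupp.mapDomain_add,
    Finsupp.mapDomain_smul, mapDomain_neg']
  try module

theorem zwc13 : zw K pxy [true] [false] = (sg [true,false]) := by
  simp [zw, shw, wparity, pxy, Finsupp.mapDomain_single]

theorem zwc14 : zw K pxy [false] [true] = (sg [false,true]) := by
  simp [zw, shw, wparity, pxy, Finsupp.mapDomain_single]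

theorem zwc15 : zw K pxy [true,false] [true,false] = (sg [true,false,true,false]) := by
  simp [zw, shw, wparity, pxy, Finsupp.mapDomain_single, Finsupp.mapDomain_add,
    Finsupp.mapDomain_smul, mapDomain_neg']
  try module

theorem zwc16 : zw K pxy [true,false] [false,true] =
    (sg [false,true,false,true]) + (sg [true,false,false,true]) + (sg [true,false,false,true]) := by
  simp [zw, shw, wparity, pxy, Finsupp.mapDomain_single, Finsupp.mapDomain_add,
    Finsupp.mapDomain_smul, mapDomain_neg']
  try module

theorem zwc17 : zw K pxy [false,true] [true,false] = -(sg [true,false,true,false]) := by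
  simp [zw, shw, wparity, pxy, Finsupp.mapDomain_single, Finsupp.mapDomain_add,
    Finsupp.mapDomain_smul, mapDomain_neg']
  try module

theorem zwc18 : zw K pxy [false,true] [false,true] =
    (sg [false,false,true,true]) + (sg [false,false,true,true]) + (sg [false,true,false,true]) := by
  simp [zw, shw, wparity, pxy, Finsupp.mapDomain_single, Finsupp.mapDomain_add,
    Finsupp.mapDomain_smul, mapDomain_neg']
  try module

/-- The separating linear functional. -/
def phiK (K : Type*) [Field K] : (List Bool →₀ K) →ₗ[K] K :=
  2 • Finsupp.lapply [true,false,true,false] + Finsupp.lapply [false,false,true,true] +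
    2 • Finsupp.lapply [false,true,true,false]

theorem phiK_apply (h : List Bool →₀ K) :
    phiK K h = 2 * h [true,false,true,false] + h [false,false,true,true] +
      2 * h [false,true,true,false] := by
  simp [phiK, Finsupp.lapply_apply, smul_eq_mul]

theorem phi_zw_zero {u v : List Bool} (h : u.length + v.length ≠ 4) :
    phiK K (zw K pxy u v) = 0 := by
  rw [phiK_apply, zw_apply_len pxy (by simp; omega), zw_apply_len pxy (by simp; omega),
    zw_apply_len pxy (by simp; omega)]
  ring

theorem phival1 : phiK K (zw K pxy [true] [false,false,true]) = 1 := by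
  rw [zwc1, phiK_apply]; simp [Finsupp.single_apply]

theorem phival2 : phiK K (zw K pxy [false,false,true] [true]) = 1 := by
  rw [zwc2, phiK_apply]; simp [Finsupp.single_apply]

theorem phival3 : phiK K (zw K pxy [true] [false,true,false]) = 2 := by
  rw [zwc3, phiK_apply]; simp [Finsupp.single_apply]

theorem phival4 : phiK K (zw K pxy [false,true,false] [true]) = 0 := by
  rw [zwc4, phiK_apply]; simp [Finsupp.single_apply]

theorem phival5 : phiK K (zw K pxy [true] [false,true,true]) = 0 := by
  rw [zwc5, phiK_apply]; simp [Finsupp.single_apply]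

theorem phival6 : phiK K (zw K pxy [false,true,true] [true]) = 0 := by
  rw [zwc6, phiK_apply]; simp [Finsupp.single_apply]

theorem phival7 : phiK K (zw K pxy [false] [false,false,true]) = 0 := by
  rw [zwc7, phiK_apply]; simp [Finsupp.single_apply]

theorem phival8 : phiK K (zw K pxy [false,false,true] [false]) = 0 := by
  rw [zwc8, phiK_apply]; simp [Finsupp.single_apply]

theorem phival9 : phiK K (zw K pxy [false] [false,true,false]) = 0 := by
  rw [zwc9, phiK_apply]; simp [Finsupp.single_apply]

theorem phival10 : phiK K (zw K pxy [false,true,false] [false]) = 0 := by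
  rw [zwc10, phiK_apply]; simp [Finsupp.single_apply]

theorem phival11 : phiK K (zw K pxy [false] [false,true,true]) = 2 := by
  rw [zwc11, phiK_apply]; simp [Finsupp.single_apply]; norm_num

theorem phival12 : phiK K (zw K pxy [false,true,true] [false]) = 2 := by
  rw [zwc12, phiK_apply]; simp [Finsupp.single_apply]

/-- The invariant predicate cutting out a subspace containing `I` but not `ω`. -/
def Good (K : Type*) [Field K] (h : List Bool →₀ K) : Prop :=
  (∀ w : List Bool, w.length ≤ 2 → h w = 0) ∧
  (∀ w : List Bool, w.length = 3 → w ≠ [false,false,true] → w ≠ [false,true,false] →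
      w ≠ [false,true,true] → h w = 0) ∧
  h [false,false,true] + h [false,true,false] = 0 ∧
  phiK K h = 0

theorem good_zero : Good K (0 : List Bool →₀ K) := by
  refine ⟨fun w _ => rfl, fun w _ _ _ _ => rfl, by simp, by simp⟩

theorem good_add {f g : List Bool →₀ K} (hf : Good K f) (hg : Good K g) :
    Good K (f + g) := by
  obtain ⟨a1, a2, a3, a4⟩ := hf
  obtain ⟨b1, b2, b3, b4⟩ := hg
  refine ⟨fun w hw => ?_, fun w hw h1 h2 h3 => ?_, ?_, ?_⟩
  · rw [Finsupp.add_apply, a1 w hw, b1 w hw, add_zero]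
  · rw [Finsupp.add_apply, a2 w hw h1 h2 h3, b2 w hw h1 h2 h3, add_zero]
  · simp only [Finsupp.add_apply]; linear_combination a3 + b3
  · rw [map_add, a4, b4, add_zero]

theorem good_smul (c : K) {f : List Bool →₀ K} (hf : Good K f) : Good K (c • f) := by
  obtain ⟨a1, a2, a3, a4⟩ := hf
  refine ⟨fun w hw => ?_, fun w hw h1 h2 h3 => ?_, ?_, ?_⟩
  · rw [Finsupp.smul_apply, a1 w hw, smul_zero]
  · rw [Finsupp.smul_apply, a2 w hw h1 h2 h3, smul_zero]
  · simp only [Finsupp.smul_apply, smul_eq_mul]; linear_combination c * a3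
  · rw [map_smul, a4, smul_zero]

theorem sum_three {N : Type*} [AddCommMonoid N] (f : List Bool →₀ K) (F : List Bool → K → N)
    (h0 : ∀ v, F v 0 = 0)
    (hrest : ∀ v, f v ≠ 0 → v ≠ [false,false,true] → v ≠ [false,true,false] →
      v ≠ [false,true,true] → F v (f v) = 0) :
    f.sum F = F [false,false,true] (f [false,false,true]) +
      F [false,true,false] (f [false,true,false]) +
      F [false,true,true] (f [false,true,true]) := by
  classical
  rw [Finsupp.sum]
  trans ∑ v ∈ (f.support ∪ {[false,false,true],[false,true,false],[false,true,true]}),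
    F v (f v)
  · apply Finset.sum_subset Finset.subset_union_left
    intro v _ hv
    rw [Finsupp.notMem_support_iff.mp hv]
    exact h0 v
  · trans ∑ v ∈ ({[false,false,true],[false,true,false],[false,true,true]} :
        Finset (List Bool)), F v (f v)
    · symm
      apply Finset.sum_subset Finset.subset_union_right
      intro v _ hv3
      simp only [Finset.mem_insert, Finset.mem_singleton] at hv3
      push_neg at hv3
      by_cases hz : f v = 0
      · rw [hz]; exact h0 v
      · exact hrest v hz hv3.1 hv3.2.1 hv3.2.2
    · rw [Finset.sum_insert (by decide), Finset.sum_insert (by decide),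
        Finset.sum_singleton, add_assoc]

theorem good_zbrk_L {g h : List Bool →₀ K} (hg : g [] = 0) (hh : Good K h) :
    Good K (zbrk K pxy g h) := by
  obtain ⟨h0, h3, h3b, h4⟩ := hh
  have len3 : ∀ w : List Bool, w.length ≤ 3 → zbrk K pxy g h w = 0 := by
    intro w hw
    have e := apply_zbrk pxy (Finsupp.lapply w) g h
    rw [Finsupp.lapply_apply] at e
    rw [e]
    apply fsum_eq_zero; intro u hu
    apply fsum_eq_zero; intro v hv
    have hv3 : 3 ≤ v.length := by
      by_contra hlt
      push_neg at hlt
      exact hv (h0 v (by omega))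
    have hu1 : 0 < u.length := List.length_pos_iff.mpr (fun h' => hu (by rw [h']; exact hg))
    rw [Finsupp.lapply_apply, Finsupp.lapply_apply, zw_apply_len pxy (by omega),
      zw_apply_len pxy (by omega)]
    ring
  refine ⟨fun w hw => len3 w (by omega), fun w hw _ _ _ => len3 w (by omega), ?_, ?_⟩
  · rw [len3 _ (by simp), len3 _ (by simp), add_zero]
  · rw [apply_zbrk pxy (phiK K) g h]
    apply fsum_eq_zero; intro u hu
    have hune : u ≠ [] := fun h' => hu (by rw [h']; exact hg)
    have hu1 : 0 < u.length := List.length_pos_iff.mpr hune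
    by_cases hul : u.length = 1
    · obtain ⟨c, rfl⟩ : ∃ c, u = [c] := by
        rcases u with _ | ⟨c, u'⟩
        · simp at hu1
        · rcases u' with _ | _
          · exact ⟨c, rfl⟩
          · simp at hul
      refine (sum_three h _ ?_ ?_).trans ?_
      · intro v; simp
      · intro v hv hv1 hv2 hv3'
        have hvlen : 3 ≤ v.length := by
          by_contra hlt; push_neg at hlt; exact hv (h0 v (by omega))
        have hvlen4 : 4 ≤ v.length := by
          rcases Nat.eq_or_lt_of_le hvlen with heq | hlt
          · exact absurd (h3 v heq.symm hv1 hv2 hv3') hv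
          · omega
        rw [phi_zw_zero (by simp; omega), phi_zw_zero (by simp; omega)]
        ring
      · rcases c with _ | _
        · simp only [phival7, phival8, phival9, phival10, phival11, phival12]
          norm_num [wparity, pxy]
        · simp only [phival1, phival2, phival3, phival4, phival5, phival6]
          norm_num [wparity, pxy]
          linear_combination (2 * g [true]) * h3b
    · apply fsum_eq_zero; intro v hv
      have hv3 : 3 ≤ v.length := by
        by_contra hlt; push_neg at hlt; exact hv (h0 v (by omega))
      rw [phi_zw_zero (by omega), phi_zw_zero (by omega)]
      ring

theorem good_zbrk_R {g h : List Bool →₀ K} (hg : g [] = 0) (hh : Good K h) :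
    Good K (zbrk K pxy h g) := by
  obtain ⟨h0, h3, h3b, h4⟩ := hh
  have len3 : ∀ w : List Bool, w.length ≤ 3 → zbrk K pxy h g w = 0 := by
    intro w hw
    have e := apply_zbrk pxy (Finsupp.lapply w) h g
    rw [Finsupp.lapply_apply] at e
    rw [e]
    apply fsum_eq_zero; intro u hu
    apply fsum_eq_zero; intro v hv
    have hu3 : 3 ≤ u.length := by
      by_contra hlt
      push_neg at hlt
      exact hu (h0 u (by omega))
    have hv1 : 0 < v.length := List.length_pos_iff.mpr (fun h' => hv (by rw [h']; exact hg))
    rw [Finsupp.lapply_apply, Finsupp.lapply_apply, zw_apply_len pxy (by omega),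
      zw_apply_len pxy (by omega)]
    ring
  refine ⟨fun w hw => len3 w (by omega), fun w hw _ _ _ => len3 w (by omega), ?_, ?_⟩
  · rw [len3 _ (by simp), len3 _ (by simp), add_zero]
  · rw [apply_zbrk pxy (phiK K) h g, Finsupp.sum_comm]
    apply fsum_eq_zero; intro v hv
    have hvne : v ≠ [] := fun h' => hv (by rw [h']; exact hg)
    have hv1 : 0 < v.length := List.length_pos_iff.mpr hvne
    by_cases hvl : v.length = 1
    · obtain ⟨c, rfl⟩ : ∃ c, v = [c] := by
        rcases v with _ | ⟨c, v'⟩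
        · simp at hv1
        · rcases v' with _ | _
          · exact ⟨c, rfl⟩
          · simp at hvl
      refine (sum_three h _ ?_ ?_).trans ?_
      · intro u; simp
      · intro u hu hu1 hu2 hu3'
        have hulen : 3 ≤ u.length := by
          by_contra hlt; push_neg at hlt; exact hu (h0 u (by omega))
        have hulen4 : 4 ≤ u.length := by
          rcases Nat.eq_or_lt_of_le hulen with heq | hlt
          · exact absurd (h3 u heq.symm hu1 hu2 hu3') hu
          · omega
        rw [phi_zw_zero (by simp; omega), phi_zw_zero (by simp; omega)]
        ring
      · rcases c with _ | _
        · simp only [phival7, phival8, phival9, phival10, phival11, phival12]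
          norm_num [wparity, pxy]
        · simp only [phival1, phival2, phival3, phival4, phival5, phival6]
          norm_num [wparity, pxy]
          linear_combination (2 * g [true]) * h3b
    · apply fsum_eq_zero; intro u hu
      have hu3 : 3 ≤ u.length := by
        by_contra hlt; push_neg at hlt; exact hu (h0 u (by omega))
      rw [phi_zw_zero (by omega), phi_zw_zero (by omega)]
      ring

theorem good_f1 :
    Good K (Finsupp.single [false,false,true] 1 - Finsupp.single [false,true,false] 1) := by
  refine ⟨fun w hw => ?_, fun w hw h1 h2 h3 => ?_, ?_, ?_⟩
  · have e1 : ([false,false,true] : List Bool) ≠ w := by rintro rfl; simp at hw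
    have e2 : ([false,true,false] : List Bool) ≠ w := by rintro rfl; simp at hw
    rw [Finsupp.sub_apply, Finsupp.single_eq_of_ne' e1, Finsupp.single_eq_of_ne' e2, sub_zero]
  · rw [Finsupp.sub_apply, Finsupp.single_eq_of_ne' (Ne.symm h1),
      Finsupp.single_eq_of_ne' (Ne.symm h2), sub_zero]
  · simp [Finsupp.single_apply]
  · rw [phiK_apply]; simp [Finsupp.single_apply]

theorem good_f2 : Good K (Finsupp.single [false,true,true] 1) := by
  refine ⟨fun w hw => ?_, fun w hw h1 h2 h3 => ?_, ?_, ?_⟩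
  · have e1 : ([false,true,true] : List Bool) ≠ w := by rintro rfl; simp at hw
    rw [Finsupp.single_eq_of_ne' e1]
  · rw [Finsupp.single_eq_of_ne' (Ne.symm h3)]
  · simp [Finsupp.single_apply]
  · rw [phiK_apply]; simp [Finsupp.single_apply]

theorem good_of_ideal {h : List Bool →₀ K}
    (hI : InIdealST K pxy
      {Finsupp.single [false,false,true] 1 - Finsupp.single [false,true,false] 1,
        Finsupp.single [false,true,true] 1} h) : Good K h := by
  induction hI with
  | gen hmem =>
    rcases hmem with rfl | hmem
    · exact good_f1
    · rw [Set.mem_singleton_iff] at hmem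
      subst hmem
      exact good_f2
  | zero => exact good_zero
  | add _ _ ih1 ih2 => exact good_add ih1 ih2
  | smul c _ ih => exact good_smul c ih
  | brL hgST _ ih => exact good_zbrk_L (InST_apply_nil pxy hgST) ih
  | brR hgST _ ih => exact good_zbrk_R (InST_apply_nil pxy hgST) ih

theorem part1_eq {f₁ f₂ : List Bool →₀ K}
    (hf₁ : f₁ = Finsupp.single [false,false,true] 1 - Finsupp.single [false,true,false] 1)
    (hf₂ : f₂ = Finsupp.single [false,true,true] 1) :
    (-Finsupp.single [true,false,true,false] 1 + Finsupp.single [true,false,false,true] 1 -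
        Finsupp.single [false,false,true,true] (1:K)) =
      zmul K pxy (Finsupp.single [true] 1) f₁ +
        (-1 : K) • zmul K pxy (Finsupp.single [false] 1) f₂ := by
  rw [hf₁, hf₂, zmul_sub_right, zmul_single_single, zmul_single_single, zmul_single_single,
    zwc1, zwc3, zwc11]
  module

theorem part2_eq :
    zbrk K pxy
        (zbrk K pxy (Finsupp.single [true] 1) (Finsupp.single [false] 1))
        (zbrk K pxy (Finsupp.single [true] 1) (Finsupp.single [false] 1)) =
      (-4 : K) • (-Finsupp.single [true,false,true,false] 1 +
        Finsupp.single [true,false,false,true] 1 -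
        Finsupp.single [false,false,true,true] (1:K)) := by
  have hbr : zbrk K pxy (Finsupp.single [true] 1) (Finsupp.single [false] (1:K)) =
      Finsupp.single [true,false] 1 - Finsupp.single [false,true] 1 := by
    rw [zbrk_single_single, zwc13, zwc14]
    simp only [wparity, pxy_true, pxy_false, List.map_cons, List.map_nil, List.sum_cons,
      List.sum_nil, add_zero, zero_add, zmod2_val_one, zmod2_val_zero, zmod2_one_add_one]
    module
  rw [hbr, zbrk_sub_left, zbrk_sub_right, zbrk_sub_right, zbrk_single_single,
    zbrk_single_single, zbrk_single_single, zbrk_single_single, zwc15, zwc16, zwc17, zwc18]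
  simp only [wparity, pxy_true, pxy_false, List.map_cons, List.map_nil, List.sum_cons,
    List.sum_nil, add_zero, zero_add, zmod2_val_one, zmod2_val_zero, zmod2_one_add_one]
  module

theorem phiK_omega :
    phiK K (-Finsupp.single [true,false,true,false] 1 + Finsupp.single [true,false,false,true] 1 -
      Finsupp.single [false,false,true,true] (1:K)) = -3 := by
  rw [phiK_apply]
  simp [Finsupp.single_apply]
  norm_num

end BoolSide

/-- For `X = {x, y}` with `x` odd and `y` even, let `I` be the ideal of
`ST(X)` generated by `f₁ = ȳyx = yyx − yxy` and `f₂ = yxx`, and `I′` the Zinbiel ideal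
generated by `I`.  Then `ω = −(x̄yxy) − yyxx = −xyxy + xyyx − yyxx` lies in
`I′ ∩ ST(X)` but not in `I`; hence `ST(X)/I` is an exceptional Tortkara superalgebra. -/
theorem exceptional_quotient {K : Type*} [Field K] [CharZero K] :
    ∀ x y : Bool, x = true → y = false →
    ∀ f₁ f₂ ω : List Bool →₀ K,
      f₁ = Finsupp.single [y, y, x] 1 - Finsupp.single [y, x, y] 1 →
      f₂ = Finsupp.single [y, x, x] 1 →
      ω = -Finsupp.single [x, y, x, y] 1 + Finsupp.single [x, y, y, x] 1 -
            Finsupp.single [y, y, x, x] 1 →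
      InIdealZin K pxy {h | InIdealST K pxy {f₁, f₂} h} ω ∧
        InST K pxy ω ∧ ¬ InIdealST K pxy {f₁, f₂} ω := by
  intro x y hx hy f₁ f₂ ω hf₁ hf₂ hω
  subst hx; subst hy
  have hω' : ω = -Finsupp.single [true,false,true,false] 1 +
      Finsupp.single [true,false,false,true] 1 -
      Finsupp.single [false,false,true,true] (1:K) := hω
  refine ⟨?_, ?_, ?_⟩
  · rw [hω', part1_eq hf₁ hf₂]
    refine InIdealZin.add ?_ ?_
    · exact InIdealZin.mulL _ (InIdealZin.gen (InIdealST.gen (Set.mem_insert _ _)))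
    · exact InIdealZin.smul _ (InIdealZin.mulL _ (InIdealZin.gen (InIdealST.gen
        (Set.mem_insert_iff.mpr (Or.inr rfl)))))
  · have h2 : ω = (-4 : K)⁻¹ • zbrk K pxy
        (zbrk K pxy (Finsupp.single [true] 1) (Finsupp.single [false] 1))
        (zbrk K pxy (Finsupp.single [true] 1) (Finsupp.single [false] 1)) := by
      rw [part2_eq, smul_smul, hω']
      norm_num
    rw [h2]
    exact InST.smul _ (InST.br (InST.br (InST.gen true) (InST.gen false))
      (InST.br (InST.gen true) (InST.gen false)))
  · intro hI
    rw [hf₁, hf₂] at hI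
    have hgood := good_of_ideal hI
    have hphi := hgood.2.2.2
    rw [hω', phiK_omega] at hphi
    exact absurd hphi (by norm_num)

end
end

section
/- The 3-dimensional superalgebra T with even basis e₁, e₂ and odd basis e₃, with nonzero products e₁·e₂ = e₁, e₁·e₃ = e₃ (extended by super anti-commutativity: e₂·e₁ = −e₁, e₃·e₁ = −e₃, all other products zero), is a Tortkara superalgebra but not a Lie superalgebra: the super Jacobian J_s(e₁, e₂, e₃) = (e₁e₂)e₃ − e₁(e₂e₃) − (−1)^{|e₂||e₃|}(e₁e₃)e₂ equals e₃ ≠ 0, while the super Tortkara identity holds for all homogeneous quadruples. -/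
/-- The 3-dimensional superalgebra `T²₁|₁⁸` with even basis `e₁, e₂`, odd basis `e₃`,
and nonzero products `e₁e₂ = e₁ = −e₂e₁`, `e₁e₃ = e₃ = −e₃e₁`. Coordinates:
`0 ↦ e₁`, `1 ↦ e₂`, `2 ↦ e₃`. -/
def t218mul (K : Type*) [Field K] (a b : Fin 3 → K) : Fin 3 → K :=
  fun i =>
    if i = 0 then a 0 * b 1 - a 1 * b 0
    else if i = 2 then a 0 * b 2 - a 2 * b 0
    else 0

/-- Homogeneity of parity `i`: even elements lie in `span{e₁,e₂}`, odd ones in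
`span{e₃}`. -/
def t218homog (K : Type*) [Field K] (i : ZMod 2) (a : Fin 3 → K) : Prop :=
  if i = 0 then a 2 = 0 else a 0 = 0 ∧ a 1 = 0

/-- The super Jacobian of the product, for homogeneous arguments of parities
`i, j, k`: `J_s(a,b,c) = (ab)c − a(bc) − (−1)^{|b||c|}(ac)b`. -/
def t218Js (K : Type*) [Field K] (j k : ZMod 2) (a b c : Fin 3 → K) : Fin 3 → K :=
  t218mul K (t218mul K a b) c - t218mul K a (t218mul K b c) -
    ((-1 : K) ^ (j.val * k.val)) • t218mul K (t218mul K a c) b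

lemma zmod2_cases (i : ZMod 2) : i = 0 ∨ i = 1 := by revert i; decide

set_option maxHeartbeats 1000000 in
/-- the superalgebra `T⁸₂|₁` is a Tortkara superalgebra (super
anti-commutative and satisfying the super Tortkara identity) but not a Lie
superalgebra: `J_s(e₁,e₂,e₃) = e₃ ≠ 0`. -/
theorem t218_tortkara_not_lie (K : Type*) [Field K] [CharZero K] :
    -- super anti-commutativity
    (∀ i j : ZMod 2, ∀ a b : Fin 3 → K, t218homog K i a → t218homog K j b →
      t218mul K a b = -(((-1 : K) ^ (i.val * j.val)) • t218mul K b a)) ∧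
    -- super Tortkara identity
    (∀ i j k l : ZMod 2, ∀ a b c d : Fin 3 → K,
      t218homog K i a → t218homog K j b → t218homog K k c → t218homog K l d →
      t218mul K (t218mul K a b) (t218mul K c d) -
          ((-1 : K) ^ (l.val * ((j + k : ZMod 2)).val)) •
            t218mul K (t218mul K a d) (t218mul K b c) =
        t218mul K (t218Js K j k a b c) d +
          ((-1 : K) ^ (i.val * j.val)) • t218mul K b (t218Js K k l a c d)) ∧
    -- not Lie: J_s(e₁,e₂,e₃) = e₃ ≠ 0
    (t218Js K 0 1 (fun i => if i = 0 then 1 else 0) (fun i => if i = 1 then 1 else 0)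
        (fun i => if i = 2 then 1 else 0) =
      (fun i => if i = 2 then 1 else 0)) ∧
    ((fun i => if i = 2 then (1 : K) else 0) : Fin 3 → K) ≠ 0 := by
  refine ⟨?_, ?_, ?_, ?_⟩
  · intro i j a b ha hb
    funext x
    rcases zmod2_cases i with rfl | rfl <;> rcases zmod2_cases j with rfl | rfl <;>
      simp only [t218homog, reduceIte, eq_false (by decide : ¬((1:ZMod 2)=0)),
        if_false] at ha hb <;>
      fin_cases x <;>
      simp [t218mul, ZMod.val_zero, ZMod.val_one, ha, hb] <;> ring
  · intro i j k l a b c d ha hb hc hd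
    funext x
    rcases zmod2_cases i with rfl | rfl <;> rcases zmod2_cases j with rfl | rfl <;>
      rcases zmod2_cases k with rfl | rfl <;> rcases zmod2_cases l with rfl | rfl <;>
      simp only [t218homog, reduceIte, eq_false (by decide : ¬((1:ZMod 2)=0)),
        if_false] at ha hb hc hd <;>
      fin_cases x <;>
      simp [t218Js, t218mul, ZMod.val_zero, ZMod.val_one, ha, hb, hc, hd,
        show (1+1:ZMod 2)=0 from by decide, show (0+1:ZMod 2)=1 from by decide,
        show (1+0:ZMod 2)=1 from by decide, show (0+0:ZMod 2)=0 from by decide] <;>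
      ring
  · funext x
    fin_cases x <;> simp [t218Js, t218mul, ZMod.val_zero, ZMod.val_one]
  · intro h
    have := congrFun h 2
    simp at this
end
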